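/- Let {x_n}, {y_n}, {z_n} be complex sequences indexed by nonzero integers satisfying the trilinear system and parity. Suppose for some integer p ≥ 2: x_n = y_n = z_n = 0 for 0 < |n| < p, y_{pn} = z_{pn} = 0 for all n ≠ 0, x_p ≠ 0, and x_{kp} ≠ 0 for all k > 0. Then y_n = z_n = 0 for all n ≠ 0. -/
import Mathlib


theorem stmt_19 (x y z : ℤ → ℂ)
    (hsys : ∀ n1 n2 : ℤ, n1 ≠ 0 → n2 ≠ 0 → n1 + n2 ≠ 0 →
      x n1 * y n2 - x (n1 + n2) * z n2 + y (n1 + n2) * z (-n1) = 0)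
    (hpar : ∀ n : ℤ, x (-n) = (starRingEnd ℂ) (x n) ∧ y (-n) = (starRingEnd ℂ) (y n) ∧
      z (-n) = (starRingEnd ℂ) (z n))
    (p : ℤ) (hp : 2 ≤ p)
    (hsmall : ∀ n : ℤ, 0 < |n| → |n| < p → x n = 0 ∧ y n = 0 ∧ z n = 0)
    (hmult : ∀ n : ℤ, n ≠ 0 → y (p * n) = 0 ∧ z (p * n) = 0)
    (hxp : x p ≠ 0)
    (hxkp : ∀ k : ℤ, 0 < k → x (k * p) ≠ 0) :
    ∀ n : ℤ, n ≠ 0 → y n = 0 ∧ z n = 0 := by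
  have hp0 : (0:ℤ) < p := by linarith
  -- a good k for each positive non-multiple n
  have hkey : ∀ n : ℤ, 0 < n → ¬ p ∣ n →
      ∃ k : ℤ, 0 < k ∧ n < k * p ∧ k * p - n < p := by
    intro n hn hdvd
    refine ⟨n / p + 1, ?_, ?_, ?_⟩
    · have : 0 ≤ n / p := Int.ediv_nonneg hn.le hp0.le
      linarith
    · have h1 : (n / p + 1) * p = p * (n / p) + p := by ring
      have h2 := Int.mul_ediv_add_emod n p
      have h3 : n % p < p := Int.emod_lt_of_pos n hp0
      linarith
    · have h1 : (n / p + 1) * p = p * (n / p) + p := by ring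
      have h2 := Int.mul_ediv_add_emod n p
      have h4 : 0 ≤ n % p := Int.emod_nonneg n hp0.ne'
      have h5 : n % p ≠ 0 := fun h => hdvd (Int.dvd_of_emod_eq_zero h)
      have h6 : 0 < n % p := lt_of_le_of_ne h4 (Ne.symm h5)
      linarith
  have hy : ∀ n : ℤ, 0 < n → y n = 0 := by
    intro n hn
    by_cases hdvd : p ∣ n
    · obtain ⟨m, rfl⟩ := hdvd
      have hm : m ≠ 0 := by rintro rfl; simp at hn
      exact (hmult m hm).1
    · obtain ⟨k, hk0, hk1, hk2⟩ := hkey n hn hdvd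
      have hkp0 : (0:ℤ) < k * p := mul_pos hk0 hp0
      have h := hsys (-(k * p)) n (by intro h; simp at h; omega) hn.ne'
        (by intro h; omega)
      have hx0 : x (-(k * p) + n) = 0 := by
        have habs : |(-(k * p) + n)| = k * p - n := by
          rw [abs_of_neg (by omega)]; ring
        exact (hsmall _ (by omega) (by omega)).1
      have hz0 : z (- -(k * p)) = 0 := by
        rw [neg_neg, mul_comm]
        exact (hmult k hk0.ne').2
      rw [hx0, hz0, zero_mul, mul_zero, sub_zero, add_zero] at h
      have hxne : x (-(k * p)) ≠ 0 := by
        rw [(hpar (k * p)).1]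
        simpa using hxkp k hk0
      exact (mul_eq_zero.mp h).resolve_left hxne
  have hyall : ∀ n : ℤ, n ≠ 0 → y n = 0 := by
    intro n hn
    rcases lt_or_gt_of_ne hn with h | h
    · have : y (-(-n)) = (starRingEnd ℂ) (y (-n)) := (hpar (-n)).2.1
      rw [neg_neg] at this
      rw [this, hy (-n) (by omega), map_zero]
    · exact hy n h
  have hz : ∀ n : ℤ, 0 < n → z n = 0 := by
    intro n hn
    by_cases hdvd : p ∣ n
    · obtain ⟨m, rfl⟩ := hdvd
      have hm : m ≠ 0 := by rintro rfl; simp at hn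
      exact (hmult m hm).2
    · obtain ⟨k, hk0, hk1, hk2⟩ := hkey n hn hdvd
      have hkp0 : (0:ℤ) < k * p := mul_pos hk0 hp0
      have h := hsys (k * p - n) n (by omega) hn.ne' (by intro h; omega)
      have hsum : k * p - n + n = k * p := by ring
      rw [hsum] at h
      have hy1 : y n = 0 := hy n hn
      have hy2 : y (k * p) = 0 := by rw [mul_comm]; exact (hmult k hk0.ne').1
      rw [hy1, hy2, mul_zero, zero_mul, zero_sub, add_zero, neg_eq_zero] at h
      exact (mul_eq_zero.mp h).resolve_left (hxkp k hk0)
  intro n hn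
  refine ⟨hyall n hn, ?_⟩
  rcases lt_or_gt_of_ne hn with h | h
  · have : z (-(-n)) = (starRingEnd ℂ) (z (-n)) := (hpar (-n)).2.2
    rw [neg_neg] at this
    rw [this, hz (-n) (by omega), map_zero]
  · exact hz n h
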